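/- Let n be a positive even natural number, m ≥ 2 a natural number, ℓ an integer, and a_1, …, a_n integers such that m does not divide k·a_j for any 1 ≤ k ≤ m−1 and 1 ≤ j ≤ n. Set θ_j = 2π·a_j/m. Then (1/m)·Σ_{k=1}^{m−1} i^{−n}·(Π_{j=1}^{n} cot(k·θ_j/2))·(exp(−2πi·kℓ/m) − 1) = (2·(−1)^{n/2+1}/m)·Σ_{k=1}^{m−1} (Π_{j=1}^{n} cot(k·θ_j/2))·sin²(kℓπ/m), where the left-hand side is a complex number and the right-hand side is the corresponding real number regarded as complex. -/

import Mathlib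

open Finset Real

lemma cot_int_mul_pi_sub' (a : ℤ) (x : ℝ) : Real.cot ((a : ℝ) * π - x) = -Real.cot x := by
  rw [Real.cot_eq_cos_div_sin, Real.cot_eq_cos_div_sin, Real.cos_int_mul_pi_sub,
    Real.sin_int_mul_pi_sub]
  rw [show -((-1 : ℝ) ^ a * Real.sin x) = (-1 : ℝ) ^ a * (-Real.sin x) by ring]
  have hne : ((-1 : ℝ) ^ a) ≠ 0 := zpow_ne_zero _ (by norm_num)
  rw [mul_div_mul_left _ _ hne, div_neg]

theorem stmt_16 (n : ℕ) (hn : 0 < n) (hn2 : Even n) (m : ℕ) (hm : 2 ≤ m) (ℓ : ℤ)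
    (a : ℕ → ℤ)
    (hfree : ∀ k : ℕ, 1 ≤ k → k ≤ m - 1 → ∀ j, 1 ≤ j → j ≤ n → ¬ ((m : ℤ) ∣ (k : ℤ) * a j))
    (θ : ℕ → ℝ) (hθ : ∀ j, θ j = 2 * π * a j / m) :
    (1 / (m : ℂ)) * ∑ k ∈ Finset.Icc 1 (m - 1),
        Complex.I ^ (-(n : ℤ))
          * ((∏ j ∈ Finset.Icc 1 n, Real.cot ((k : ℝ) * θ j / 2) : ℝ) : ℂ)
          * (Complex.exp (-(2 * (π : ℂ) * Complex.I * k * ℓ / m)) - 1)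
      = (((2 * (-1 : ℝ) ^ (n / 2 + 1) / m) * ∑ k ∈ Finset.Icc 1 (m - 1),
          (∏ j ∈ Finset.Icc 1 n, Real.cot ((k : ℝ) * θ j / 2))
            * Real.sin ((k : ℝ) * ℓ * π / m) ^ 2 : ℝ) : ℂ) := by
  obtain ⟨t, ht⟩ := hn2
  have htn : n / 2 = t := by omega
  have hmR : (m : ℝ) ≠ 0 := by positivity
  set c : ℕ → ℝ := fun k => ∏ j ∈ Finset.Icc 1 n, Real.cot ((k : ℝ) * θ j / 2) with hc
  set F : ℕ → ℂ := fun k =>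
    ((c k : ℝ) : ℂ) * (Complex.exp (-(2 * (π : ℂ) * Complex.I * k * ℓ / m)) - 1) with hF
  -- the constant i^{-n}
  have hI : Complex.I ^ (-(n : ℤ)) = (((-1 : ℝ) ^ t : ℝ) : ℂ) := by
    rw [zpow_neg, zpow_natCast, ht, ← two_mul, pow_mul, Complex.I_sq]
    push_cast
    rw [← inv_pow, inv_neg, inv_one]
  -- symmetry of the cotangent product
  have hcsym : ∀ k ∈ Finset.Icc 1 (m - 1), c (m - k) = c k := by
    intro k hk
    simp only [Finset.mem_Icc] at hk
    simp only [hc]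
    have key : ∀ j, Real.cot (((m - k : ℕ) : ℝ) * θ j / 2)
        = -Real.cot ((k : ℝ) * θ j / 2) := by
      intro j
      have hkm : k ≤ m := by omega
      have hcast : ((m - k : ℕ) : ℝ) = (m : ℝ) - k := by push_cast [hkm]; ring
      have harg : ((m - k : ℕ) : ℝ) * θ j / 2 = ((a j : ℤ) : ℝ) * π - (k : ℝ) * θ j / 2 := by
        rw [hcast, hθ j]
        field_simp
      rw [harg, cot_int_mul_pi_sub']
    rw [Finset.prod_congr rfl fun j _ => key j,
      Finset.prod_congr rfl (fun j (_ : j ∈ Finset.Icc 1 n) =>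
        (neg_eq_neg_one_mul (Real.cot ((k : ℝ) * θ j / 2)))),
      Finset.prod_mul_distrib, Finset.prod_const, Nat.card_Icc]
    have : n + 1 - 1 = t + t := by omega
    rw [this, ← two_mul, pow_mul]
    norm_num
  -- symmetry of the exponential
  have hesym : ∀ k ∈ Finset.Icc 1 (m - 1),
      Complex.exp (-(2 * (π : ℂ) * Complex.I * ((m - k : ℕ) : ℂ) * ℓ / m))
        = Complex.exp (2 * (π : ℂ) * Complex.I * k * ℓ / m) := by
    intro k hk
    simp only [Finset.mem_Icc] at hk
    have hkm : k ≤ m := by omega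
    have hmC : (m : ℂ) ≠ 0 := by exact_mod_cast Nat.cast_ne_zero.2 (by omega)
    have hcast : ((m - k : ℕ) : ℂ) = (m : ℂ) - k := by push_cast [hkm]; ring
    rw [hcast]
    have harg : -(2 * (π : ℂ) * Complex.I * ((m : ℂ) - k) * ℓ / m)
        = 2 * (π : ℂ) * Complex.I * k * ℓ / m + ((-ℓ : ℤ) : ℂ) * (2 * π * Complex.I) := by
      field_simp
      push_cast; ring
    rw [harg, Complex.exp_add, Complex.exp_int_mul_two_pi_mul_I, mul_one]
  -- sum reflection
  have hrefl : ∑ k ∈ Finset.Icc 1 (m - 1), F k = ∑ k ∈ Finset.Icc 1 (m - 1), F (m - k) := by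
    refine Finset.sum_nbij' (i := fun k => m - k) (j := fun k => m - k) ?_ ?_ ?_ ?_ ?_
    · intro k hk; simp only [Finset.mem_Icc] at hk ⊢; omega
    · intro k hk; simp only [Finset.mem_Icc] at hk ⊢; omega
    · intro k hk; simp only [Finset.mem_Icc] at hk; show m - (m - k) = k; omega
    · intro k hk; simp only [Finset.mem_Icc] at hk; show m - (m - k) = k; omega
    · intro k hk
      simp only [Finset.mem_Icc] at hk
      have : m - (m - k) = k := by omega
      rw [this]
  -- pairing identity
  have hpair : ∀ k ∈ Finset.Icc 1 (m - 1), F k + F (m - k)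
      = ((2 * c k * (Real.cos (2 * π * k * ℓ / m) - 1) : ℝ) : ℂ) := by
    intro k hk
    simp only [hF]
    rw [hcsym k hk, hesym k hk]
    have hz : -(2 * (π : ℂ) * Complex.I * k * ℓ / m)
        = -((2 * π * k * ℓ / m : ℂ) * Complex.I) := by ring
    have hz' : (2 * (π : ℂ) * Complex.I * k * ℓ / m)
        = (2 * π * k * ℓ / m : ℂ) * Complex.I := by ring
    rw [hz, hz']
    have htc := Complex.two_cos (2 * π * k * ℓ / m : ℂ)
    rw [neg_mul] at htc
    push_cast
    linear_combination (-((c k : ℝ) : ℂ)) * htc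
  -- the complex sum is real
  have hFsum : ∑ k ∈ Finset.Icc 1 (m - 1), F k
      = (((∑ k ∈ Finset.Icc 1 (m - 1), c k * (Real.cos (2 * π * k * ℓ / m) - 1)) : ℝ) : ℂ) := by
    have h1 : (2 : ℂ) * ∑ k ∈ Finset.Icc 1 (m - 1), F k
        = ∑ k ∈ Finset.Icc 1 (m - 1), (F k + F (m - k)) := by
      rw [Finset.sum_add_distrib, ← hrefl]; ring
    have h2 : ∑ k ∈ Finset.Icc 1 (m - 1), (F k + F (m - k))
        = ∑ k ∈ Finset.Icc 1 (m - 1),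
            ((2 * c k * (Real.cos (2 * π * k * ℓ / m) - 1) : ℝ) : ℂ) :=
      Finset.sum_congr rfl hpair
    have h2ne : (2 : ℂ) ≠ 0 := two_ne_zero
    apply mul_left_cancel₀ h2ne
    rw [h1, h2]
    push_cast
    rw [Finset.mul_sum]
    exact Finset.sum_congr rfl fun k _ => by ring
  -- assemble
  have hL : ∑ k ∈ Finset.Icc 1 (m - 1),
      Complex.I ^ (-(n : ℤ)) * ((c k : ℝ) : ℂ)
        * (Complex.exp (-(2 * (π : ℂ) * Complex.I * k * ℓ / m)) - 1)
      = (((-1 : ℝ) ^ t : ℝ) : ℂ) * ∑ k ∈ Finset.Icc 1 (m - 1), F k := by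
    rw [Finset.mul_sum]
    refine Finset.sum_congr rfl fun k _ => ?_
    rw [hI]
    simp only [hF]
    ring
  rw [hL, hFsum, htn]
  set R : ℝ := ∑ k ∈ Finset.Icc 1 (m - 1), c k * (Real.cos (2 * π * k * ℓ / m) - 1) with hR
  set S : ℝ := ∑ k ∈ Finset.Icc 1 (m - 1), c k * Real.sin ((k : ℝ) * ℓ * π / m) ^ 2 with hS
  have hRS : R = -2 * S := by
    rw [hR, hS, Finset.mul_sum]
    refine Finset.sum_congr rfl fun k _ => ?_
    have harg : 2 * π * (k : ℝ) * ℓ / m = 2 * ((k : ℝ) * ℓ * π / m) := by ring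
    rw [harg, Real.cos_two_mul, Real.cos_sq']
    ring
  have hgoal : (1 / (m : ℝ)) * ((-1 : ℝ) ^ t * R) = (2 * (-1 : ℝ) ^ (t + 1) / m) * S := by
    rw [hRS, pow_succ]
    ring
  calc (1 / (m : ℂ)) * ((((-1 : ℝ) ^ t : ℝ) : ℂ) * ((R : ℝ) : ℂ))
      = (((1 / (m : ℝ)) * ((-1 : ℝ) ^ t * R) : ℝ) : ℂ) := by push_cast; ring
    _ = (((2 * (-1 : ℝ) ^ (t + 1) / m) * S : ℝ) : ℂ) := by rw [hgoal]
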